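/- Let β > 0, t > 0, and w_1, w_2 > 0 with e^{−βt} ≤ w_2/w_1 ≤ e^{βt}. Then (β/2) ∫_{−∞}^{∞} max( e^{−β|s|}/w_1 , e^{−β|s−t|}/w_2 ) ds = 1/w_1 + 1/w_2 − e^{−βt/2}/√(w_1 w_2). -/

import Mathlib

open MeasureTheory Set

lemma I_Ioi (b a : ℝ) (hb : 0 < b) :
    ∫ x in Ioi a, Real.exp (-(b*x)) = Real.exp (-(b*a)) / b := by
  have h := integral_comp_mul_left_Ioi (fun x => Real.exp (-x)) a hb
  simp only [smul_eq_mul] at h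
  rw [h, integral_exp_neg_Ioi]
  ring

lemma I_Iic (b a : ℝ) (hb : 0 < b) :
    ∫ x in Iic a, Real.exp (b*x) = Real.exp (b*a) / b := by
  have h := integral_comp_neg_Iic a (fun x => Real.exp (-(b*x)))
  simp only [mul_neg, neg_neg] at h
  rw [h, I_Ioi b (-a) hb]
  ring_nf

lemma IOn_Ioi (b a d : ℝ) (hb : 0 < b) :
    IntegrableOn (fun x : ℝ => Real.exp (-(b*x) + d)) (Ioi a) := by
  have h := (exp_neg_integrableOn_Ioi a hb).const_mul (Real.exp d)
  refine IntegrableOn.congr_fun h (fun x _ => ?_) measurableSet_Ioi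
  rw [← Real.exp_add, neg_mul]; ring_nf

lemma IOn_Iic (b a d : ℝ) (hb : 0 < b) :
    IntegrableOn (fun x : ℝ => Real.exp (b*x + d)) (Iic a) := by
  have A : MeasurableEmbedding (fun x : ℝ => -x) :=
    (Homeomorph.neg ℝ).isClosedEmbedding.measurableEmbedding
  have key : Measure.map (fun x : ℝ => -x) ((volume : Measure ℝ).restrict (Ici (-a)))
      = (volume : Measure ℝ).restrict (Iic a) := by
    have h1 := Measure.restrict_map (μ := (volume : Measure ℝ)) (measurable_neg : Measurable (fun x : ℝ => -x))
      (measurableSet_Iic (a := a))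
    rw [show ((fun x : ℝ => -x) ⁻¹' Iic a) = Ici (-a) by ext x; simp [neg_le]] at h1
    rw [← h1, show Measure.map (fun x : ℝ => -x) (volume : Measure ℝ) = volume from
      Measure.map_neg_eq_self _]
  rw [IntegrableOn, ← key, A.integrable_map_iff]
  have h2 : IntegrableOn ((fun x => Real.exp (b*x + d)) ∘ fun x : ℝ => -x) (Ici (-a)) := by
    rw [integrableOn_Ici_iff_integrableOn_Ioi]
    have h := ((exp_neg_integrableOn_Ioi (-a) hb).const_mul (Real.exp d))
    refine IntegrableOn.congr_fun h (fun x _ => ?_) measurableSet_Ioi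
    simp only [Function.comp, ← Real.exp_add]
    ring_nf
  exact h2

lemma I_ival (b d u v : ℝ) (hb : b ≠ 0) :
    ∫ x in u..v, Real.exp (b*x + d) = (Real.exp (b*v + d) - Real.exp (b*u + d)) / b := by
  have hd : ∀ x ∈ Set.uIcc u v, HasDerivAt (fun y => Real.exp (b*y + d) / b) (Real.exp (b*x + d)) x := by
    intro x _
    have h1 : HasDerivAt (fun y : ℝ => b*y + d) b x := by
      simpa using ((hasDerivAt_id x).const_mul b).add_const d
    have := (h1.exp).div_const b
    simpa [mul_comm, hb] using this
  rw [intervalIntegral.integral_eq_sub_of_hasDerivAt hd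
    ((Real.continuous_exp.comp (by continuity)).intervalIntegrable u v)]
  ring

lemma I_Ioi' (b a d : ℝ) (hb : 0 < b) :
    ∫ x in Ioi a, Real.exp (-(b*x) + d) = Real.exp (-(b*a) + d) / b := by
  simp_rw [Real.exp_add]
  rw [integral_mul_const, I_Ioi b a hb]
  ring

lemma I_Iic' (b a d : ℝ) (hb : 0 < b) :
    ∫ x in Iic a, Real.exp (b*x + d) = Real.exp (b*a + d) / b := by
  simp_rw [Real.exp_add]
  rw [integral_mul_const, I_Iic b a hb]
  ring

/-- Middle case of the bivariate exponential model: the exponent measure. -/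
theorem exponential_model_middle (β t w₁ w₂ : ℝ) (hβ : 0 < β) (ht : 0 < t)
    (hw₁ : 0 < w₁) (hw₂ : 0 < w₂)
    (h₁ : w₁ * Real.exp (-β * t) ≤ w₂) (h₂ : w₂ ≤ w₁ * Real.exp (β * t)) :
    (β / 2) * ∫ s, max (Real.exp (-β * |s|) / w₁) (Real.exp (-β * |s - t|) / w₂) =
      1 / w₁ + 1 / w₂ - Real.exp (-β * t / 2) / Real.sqrt (w₁ * w₂) := by
  set L : ℝ := Real.log w₂ - Real.log w₁ with hL
  set c : ℝ := (β*t + L) / (2*β) with hc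
  -- bounds on L
  have hL1 : -(β*t) ≤ L := by
    have h := Real.log_le_log (by positivity) h₁
    rw [Real.log_mul hw₁.ne' (Real.exp_ne_zero _), Real.log_exp] at h
    simp only [hL]; linarith
  have hL2 : L ≤ β*t := by
    have h := Real.log_le_log hw₂ h₂
    rw [Real.log_mul hw₁.ne' (Real.exp_ne_zero _), Real.log_exp] at h
    simp only [hL]; linarith
  have hc0 : 0 ≤ c := div_nonneg (by linarith) (by linarith)
  have hct : c ≤ t := by
    rw [hc, div_le_iff₀ (by linarith)]; linarith
  have hβc : β*c = (β*t + L)/2 := by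
    rw [hc]; field_simp
  have hβtc : β*(t - c) = (β*t - L)/2 := by
    rw [hc]; field_simp; ring
  -- key exponential identities
  have hsqrt : Real.sqrt (w₁*w₂) = Real.exp ((Real.log w₁ + Real.log w₂)/2) := by
    rw [Real.sqrt_eq_rpow, Real.rpow_def_of_pos (by positivity)]
    congr 1
    rw [Real.log_mul hw₁.ne' hw₂.ne']
    ring
  set E : ℝ := Real.exp (-β * t / 2) / Real.sqrt (w₁ * w₂) with hE
  have e1 : Real.exp (-(β*c)) = w₁ * E := by
    have hrhs : w₁ * E = Real.exp (Real.log w₁ + (-β*t/2) - (Real.log w₁ + Real.log w₂)/2) := by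
      rw [Real.exp_sub, Real.exp_add, Real.exp_log hw₁, ← hsqrt, hE]
      ring
    rw [hrhs, hβc]
    congr 1
    rw [hL]; ring
  have e2 : Real.exp (-(β*(t - c))) = w₂ * E := by
    have hrhs : w₂ * E = Real.exp (Real.log w₂ + (-β*t/2) - (Real.log w₁ + Real.log w₂)/2) := by
      rw [Real.exp_sub, Real.exp_add, Real.exp_log hw₂, ← hsqrt, hE]
      ring
    rw [hrhs, hβtc]
    congr 1
    rw [hL]; ring
  -- pointwise description of the max
  have hmaxL : ∀ s ∈ Iic c,
      max (Real.exp (-β * |s|) / w₁) (Real.exp (-β * |s - t|) / w₂)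
        = Real.exp (-β * |s|) / w₁ := by
    intro s hs
    have hs' : s ≤ c := hs
    apply max_eq_left
    rw [div_le_div_iff₀ hw₂ hw₁]
    have hA : Real.exp (-β * |s - t|) * w₁ = Real.exp (-β * |s - t| + Real.log w₁) := by
      rw [Real.exp_add, Real.exp_log hw₁]
    have hB : Real.exp (-β * |s|) * w₂ = Real.exp (-β * |s| + Real.log w₂) := by
      rw [Real.exp_add, Real.exp_log hw₂]
    rw [hA, hB, Real.exp_le_exp]
    have hst : |s - t| = t - s := by rw [abs_of_nonpos (by linarith : s - t ≤ 0)]; ring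
    have habs : |s| + s ≤ 2*c := by
      rcases abs_cases s with ⟨h, _⟩ | ⟨h, _⟩ <;> rw [h] <;> linarith
    have hmul : β*(|s| + s) ≤ β*(2*c) := mul_le_mul_of_nonneg_left habs hβ.le
    rw [hst]
    nlinarith [hβc]
  have hmaxR : ∀ s ∈ Ioi c,
      max (Real.exp (-β * |s|) / w₁) (Real.exp (-β * |s - t|) / w₂)
        = Real.exp (-β * |s - t|) / w₂ := by
    intro s hs
    have hs' : c < s := hs
    apply max_eq_right
    rw [div_le_div_iff₀ hw₁ hw₂]
    have hA : Real.exp (-β * |s|) * w₂ = Real.exp (-β * |s| + Real.log w₂) := by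
      rw [Real.exp_add, Real.exp_log hw₂]
    have hB : Real.exp (-β * |s - t|) * w₁ = Real.exp (-β * |s - t| + Real.log w₁) := by
      rw [Real.exp_add, Real.exp_log hw₁]
    rw [hA, hB, Real.exp_le_exp]
    have hss : |s| = s := abs_of_nonneg (by linarith)
    have hmul : β*c ≤ β*s := mul_le_mul_of_nonneg_left hs'.le hβ.le
    rw [hss]
    rcases abs_cases (s - t) with ⟨h, _⟩ | ⟨h, _⟩ <;> rw [h] <;> nlinarith [hβc]
  -- integrability
  have hI1 : IntegrableOn (fun s : ℝ => Real.exp (-β * |s|)) (Iic 0) := by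
    refine IntegrableOn.congr_fun (IOn_Iic β 0 0 hβ) (fun x hx => ?_) measurableSet_Iic
    rw [abs_of_nonpos (mem_Iic.1 hx)]
    ring_nf
  have hI2 : IntegrableOn (fun s : ℝ => Real.exp (-β * |s|)) (Ioi 0) := by
    refine IntegrableOn.congr_fun (IOn_Ioi β 0 0 hβ) (fun x hx => ?_) measurableSet_Ioi
    rw [abs_of_nonneg (le_of_lt (mem_Ioi.1 hx))]
    ring_nf
  have hg : Integrable (fun s : ℝ => Real.exp (-β * |s|)) := by
    rw [← integrableOn_univ, ← Iic_union_Ioi (a := (0:ℝ))]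
    exact hI1.union hI2
  have hg2 : Integrable (fun s : ℝ => Real.exp (-β * |s - t|)) := hg.comp_sub_right t
  have hF : Integrable (fun s : ℝ =>
      max (Real.exp (-β * |s|) / w₁) (Real.exp (-β * |s - t|) / w₂)) := by
    have h := (hg.div_const w₁).sup (hg2.div_const w₂)
    exact h
  -- split the integral at c
  rw [← intervalIntegral.integral_Iic_add_Ioi (b := c) hF.integrableOn hF.integrableOn]
  -- left piece
  have hIic : ∫ s in Iic c,
      max (Real.exp (-β * |s|) / w₁) (Real.exp (-β * |s - t|) / w₂)
      = 1/(β*w₁) + (Real.exp (-(β*c)) - 1)/(-β)/w₁ := by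
    rw [setIntegral_congr_fun measurableSet_Iic hmaxL]
    have hsplit := intervalIntegral.integral_Iic_sub_Iic (a := 0) (b := c)
      ((hg.div_const w₁).integrableOn) ((hg.div_const w₁).integrableOn)
    have hP1 : ∫ s in Iic (0:ℝ), Real.exp (-β * |s|) / w₁ = 1/(β*w₁) := by
      rw [setIntegral_congr_fun measurableSet_Iic
        (g := fun s : ℝ => Real.exp (β*s + 0) / w₁)
        (fun s hs => by rw [abs_of_nonpos (mem_Iic.1 hs)]; ring_nf)]
      rw [integral_div, I_Iic' β 0 0 hβ]
      simp
      ring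
    have hP2 : ∫ s in (0:ℝ)..c, Real.exp (-β * |s|) / w₁
        = (Real.exp (-(β*c)) - 1)/(-β)/w₁ := by
      rw [intervalIntegral.integral_congr
        (g := fun s : ℝ => Real.exp ((-β)*s + 0) / w₁)
        (fun s hs => by
          rw [Set.uIcc_of_le hc0] at hs
          rw [abs_of_nonneg hs.1]; ring_nf)]
      rw [intervalIntegral.integral_div, I_ival (-β) 0 0 c (neg_ne_zero.2 hβ.ne')]
      simp
    linarith [hsplit, hP1, hP2]
  -- right piece
  have hIoi : ∫ s in Ioi c,
      max (Real.exp (-β * |s|) / w₁) (Real.exp (-β * |s - t|) / w₂)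
      = (1 - Real.exp (-(β*(t - c))))/β/w₂ + 1/(β*w₂) := by
    rw [setIntegral_congr_fun measurableSet_Ioi hmaxR]
    rw [← Ioc_union_Ioi_eq_Ioi hct,
      setIntegral_union (Ioc_disjoint_Ioi le_rfl) measurableSet_Ioi
        ((hg2.div_const w₂).integrableOn) ((hg2.div_const w₂).integrableOn)]
    have hP3 : ∫ s in Ioc c t, Real.exp (-β * |s - t|) / w₂
        = (1 - Real.exp (-(β*(t - c))))/β/w₂ := by
      rw [← intervalIntegral.integral_of_le hct]
      rw [intervalIntegral.integral_congr
        (g := fun s : ℝ => Real.exp (β*s + (-(β*t))) / w₂)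
        (fun s hs => by
          rw [Set.uIcc_of_le hct] at hs
          rw [show |s - t| = -(s - t) from abs_of_nonpos (by linarith [hs.2])]
          ring_nf)]
      rw [intervalIntegral.integral_div, I_ival β (-(β*t)) c t hβ.ne']
      rw [show β*t + -(β*t) = (0:ℝ) by ring, show β*c + -(β*t) = -(β*(t-c)) by ring]
      simp
    have hP4 : ∫ s in Ioi t, Real.exp (-β * |s - t|) / w₂ = 1/(β*w₂) := by
      rw [setIntegral_congr_fun measurableSet_Ioi
        (g := fun s : ℝ => Real.exp (-(β*s) + β*t) / w₂)
        (fun s hs => by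
          rw [show |s - t| = s - t from abs_of_nonneg (by linarith [mem_Ioi.1 hs])]
          ring_nf)]
      rw [integral_div, I_Ioi' β t (β*t) hβ]
      simp
      ring
    rw [hP3, hP4]
  rw [hIic, hIoi, e1, e2]
  field_simp
  ring
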